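/- Let λ ∈ ℝ and let φ : (l,r) → ℝ be twice differentiable with a(x)φ''(x) + b(x)φ'(x) = -λφ(x) for all x in (l,r). Then ψ := φ'/s' is twice differentiable on (l,r) and satisfies a(x)ψ''(x) + (a'(x) - b(x))ψ'(x) = -λψ(x) for all x in (l,r). (In the paper's notation: if Lφ = -λφ then L̂(D_{m̂}φ) = -λ D_{m̂}φ, i.e. D_s maps eigenfunctions of the generator L to eigenfunctions of the conjugate generator L̂ with the same eigenvalue.) -/

import Mathlib

open MeasureTheory

/-- `D_s = D_{m̂}` maps eigenfunctions of `L = a d²/dx² + b d/dx` to eigenfunctions of the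
conjugate generator `L̂ = a d²/dx² + (a'-b) d/dx` with the same eigenvalue: if
`a φ'' + b φ' = -λ φ` on `(l,r)`, then `ψ = φ'/s'` is twice differentiable on `(l,r)` and
`a ψ'' + (a'-b) ψ' = -λ ψ` there. -/
theorem Ds_maps_eigenfunctions_to_conjugate_eigenfunctions
    (l r : EReal) (hlr : l < r)
    (I : Set ℝ) (hI : I = {x : ℝ | l < (x : EReal) ∧ (x : EReal) < r})
    (a a' b : ℝ → ℝ) (c : ℝ) (hc : c ∈ I)
    (ha : ∀ x ∈ I, HasDerivAt a (a' x) x)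
    (ha' : ContinuousOn a' I)
    (hb : ContinuousOn b I)
    (hapos : ∀ x ∈ I, 0 < a x)
    (s' : ℝ → ℝ)
    (hs' : ∀ x : ℝ, s' x = Real.exp (-(∫ y in c..x, b y / a y)))
    (lam : ℝ) (φ : ℝ → ℝ)
    (hφ1 : ∀ x ∈ I, DifferentiableAt ℝ φ x)
    (hφ2 : ∀ x ∈ I, DifferentiableAt ℝ (deriv φ) x)
    (hode : ∀ x ∈ I,
      a x * deriv (deriv φ) x + b x * deriv φ x = -lam * φ x) :
    ∀ x ∈ I,
      DifferentiableAt ℝ (fun y => deriv φ y / s' y) x ∧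
      DifferentiableAt ℝ (deriv (fun y => deriv φ y / s' y)) x ∧
      a x * deriv (deriv (fun y => deriv φ y / s' y)) x
        + (a' x - b x) * deriv (fun y => deriv φ y / s' y) x
        = -lam * (deriv φ x / s' x) := by
  have hIopen : IsOpen I := by
    rw [hI]; exact isOpen_Ioo.preimage continuous_coe_real_ereal
  have huIcc : ∀ x ∈ I, Set.uIcc c x ⊆ I := by
    intro x hx z hz
    rw [hI] at hc hx ⊢
    rcases Set.mem_uIcc.1 hz with ⟨h1, h2⟩ | ⟨h1, h2⟩
    · exact ⟨lt_of_lt_of_le hc.1 (EReal.coe_le_coe_iff.2 h1),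
        lt_of_le_of_lt (EReal.coe_le_coe_iff.2 h2) hx.2⟩
    · exact ⟨lt_of_lt_of_le hx.1 (EReal.coe_le_coe_iff.2 h1),
        lt_of_le_of_lt (EReal.coe_le_coe_iff.2 h2) hc.2⟩
  have hcontA : ContinuousOn a I := fun x hx => (ha x hx).continuousAt.continuousWithinAt
  have haneg : ∀ x ∈ I, a x ≠ 0 := fun x hx => (hapos x hx).ne'
  have hgcont : ContinuousOn (fun y => b y / a y) I := hb.div hcontA haneg
  have hs'pos : ∀ x, 0 < s' x := fun x => (hs' x) ▸ Real.exp_pos _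
  have hs'deriv : ∀ x ∈ I, HasDerivAt s' (-(b x / a x) * s' x) x := by
    intro x hx
    have hint : IntervalIntegrable (fun y => b y / a y) volume c x :=
      (hgcont.mono (huIcc x hx)).intervalIntegrable
    have hmeas : StronglyMeasurableAtFilter (fun y => b y / a y) (nhds x) volume :=
      ⟨I, hIopen.mem_nhds hx, hgcont.aestronglyMeasurable hIopen.measurableSet⟩
    have hF : HasDerivAt (fun t => ∫ y in c..t, b y / a y) (b x / a x) x :=
      intervalIntegral.integral_hasDerivAt_right hint hmeas
        (hgcont.continuousAt (hIopen.mem_nhds hx))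
    have h := (hF.neg).exp
    have hfun : s' = fun t => Real.exp (-(∫ y in c..t, b y / a y)) := funext hs'
    rw [hfun]
    simpa [mul_comm] using h
  -- derivative of ψ
  have hψderiv : ∀ x ∈ I,
      HasDerivAt (fun y => deriv φ y / s' y) (-lam * φ x / (a x * s' x)) x := by
    intro x hx
    have h : HasDerivAt (fun y => deriv φ y / s' y) _ x := ((hφ2 x hx).hasDerivAt).div (hs'deriv x hx) (hs'pos x).ne'
    convert h using 1
    have hode' := hode x hx
    have hsne := (hs'pos x).ne'
    have hane := haneg x hx
    field_simp
    linear_combination (-1 : ℝ) * hode'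
  have hψ'eq : ∀ x ∈ I, deriv (fun y => deriv φ y / s' y) x = -lam * φ x / (a x * s' x) :=
    fun x hx => (hψderiv x hx).deriv
  have haders : ∀ x ∈ I, HasDerivAt (fun y => a y * s' y) ((a' x - b x) * s' x) x := by
    intro x hx
    have h : HasDerivAt (fun y => a y * s' y) _ x := (ha x hx).mul (hs'deriv x hx)
    convert h using 1
    have hane := haneg x hx
    field_simp
    ring
  have hψ1deriv : ∀ x ∈ I,
      HasDerivAt (fun y => -lam * φ y / (a y * s' y))
        (((-lam * deriv φ x) * (a x * s' x) - (-lam * φ x) * ((a' x - b x) * s' x))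
          / (a x * s' x) ^ 2) x := by
    intro x hx
    have hn : HasDerivAt (fun y => -lam * φ y) (-lam * deriv φ x) x :=
      ((hφ1 x hx).hasDerivAt).const_mul (-lam)
    exact hn.div (haders x hx) (mul_ne_zero (haneg x hx) (hs'pos x).ne')
  intro x hx
  refine ⟨(hψderiv x hx).differentiableAt, ?_, ?_⟩
  · have hev : deriv (fun y => deriv φ y / s' y) =ᶠ[nhds x]
        (fun y => -lam * φ y / (a y * s' y)) :=
      Filter.eventuallyEq_of_mem (hIopen.mem_nhds hx) (fun y hy => hψ'eq y hy)
    exact (hψ1deriv x hx).differentiableAt.congr_of_eventuallyEq hev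
  · have hev : deriv (fun y => deriv φ y / s' y) =ᶠ[nhds x]
        (fun y => -lam * φ y / (a y * s' y)) :=
      Filter.eventuallyEq_of_mem (hIopen.mem_nhds hx) (fun y hy => hψ'eq y hy)
    rw [hev.deriv_eq, (hψ1deriv x hx).deriv, hψ'eq x hx]
    have hane := haneg x hx
    have hsne := (hs'pos x).ne'
    field_simp
    ring
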